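/- Let α, β, γ be positive integers with γ = α + β, let t be a complex number avoiding all poles, and let x, y be complex with |x|<1, |y|<1. Then Σ_{m,n>0} [ β x^m y^n / ((m−βt)(mα+nβ)) − β x^m y^{m+n} / ((m−βt)(mα+(m+n)β)) + α x^{m+n} y^m / ((m+αt)((m+n)α+mβ)) ] = (1/(γt)) Σ_{n>0} [ (xy)^n/(n−βt) − (xy)^n/n ] + Σ_{m>n>0} x^m y^n / ((m−βt)(n+αt)). -/

import Mathlib

private lemma lb_aux (z : ℂ) (h : ∀ m : ℕ, 0 < m → ((m : ℕ) : ℂ) ≠ z) :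
    ∃ c > 0, ∀ m : ℕ, 0 < m → c ≤ ‖((m : ℕ) : ℂ) - z‖ := by
  set N : ℕ := ⌈‖z‖⌉₊ with hN
  have hne : (Finset.Icc 1 (N + 1)).Nonempty := ⟨1, by simp⟩
  set c0 : ℝ := (Finset.Icc 1 (N + 1)).inf' hne (fun m => ‖((m : ℕ) : ℂ) - z‖) with hc0
  refine ⟨min 1 c0, ?_, ?_⟩
  · refine lt_min one_pos ?_
    rw [hc0, Finset.lt_inf'_iff]
    intro m hm
    have hm1 : 0 < m := (Finset.mem_Icc.mp hm).1
    have : ((m : ℕ) : ℂ) - z ≠ 0 := sub_ne_zero.mpr (h m hm1)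
    simpa using norm_pos_iff.mpr this
  · intro m hm
    by_cases hcase : m ≤ N + 1
    · exact le_trans (min_le_right _ _)
        (Finset.inf'_le _ (Finset.mem_Icc.mpr ⟨hm, hcase⟩))
    · refine le_trans (min_le_left _ _) ?_
      have h1 : ‖z‖ ≤ (N : ℝ) := Nat.le_ceil ‖z‖
      have h2 : (N : ℝ) + 2 ≤ (m : ℝ) := by
        have : N + 2 ≤ m := by omega
        exact_mod_cast this
      have h3 : ‖((m : ℕ) : ℂ)‖ = (m : ℝ) := by
        simp [Complex.norm_natCast]
      calc (1 : ℝ) ≤ (m : ℝ) - ‖z‖ := by linarith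
        _ ≤ ‖((m : ℕ) : ℂ)‖ - ‖z‖ := by rw [h3]
        _ ≤ ‖((m : ℕ) : ℂ) - z‖ := norm_sub_norm_le _ _

private noncomputable def aT (α β : ℕ) (t x y : ℂ) (m n : ℕ) : ℂ :=
  (β : ℂ) * x ^ m * y ^ n / ((((m : ℕ) : ℂ) - (β : ℂ) * t) * ((m * α + n * β : ℕ) : ℂ))

private noncomputable def cT (α β : ℕ) (t x y : ℂ) (m n : ℕ) : ℂ :=
  (α : ℂ) * x ^ m * y ^ n / ((((n : ℕ) : ℂ) + (α : ℂ) * t) * ((m * α + n * β : ℕ) : ℂ))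

private noncomputable def eT (α β : ℕ) (t x y : ℂ) (m n : ℕ) : ℂ :=
  x ^ m * y ^ n / ((((m : ℕ) : ℂ) - (β : ℂ) * t) * ((((n : ℕ) : ℂ)) + (α : ℂ) * t))

private lemma partial_frac (α β : ℕ) (t x y : ℂ) (m n : ℕ)
    (hα : 0 < α) (hβ : 0 < β) (hm : 0 < m)
    (hmt : ((m : ℕ) : ℂ) - (β : ℂ) * t ≠ 0)
    (hnt : ((n : ℕ) : ℂ) + (α : ℂ) * t ≠ 0) :
    aT α β t x y m n + cT α β t x y m n = eT α β t x y m n := by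
  have hd : ((m * α + n * β : ℕ) : ℂ)
      = (β : ℂ) * (((n:ℂ)) + (α:ℂ)*t) + (α:ℂ) * (((m:ℂ)) - (β:ℂ)*t) := by
    push_cast; ring
  have hd0 : ((m * α + n * β : ℕ) : ℂ) ≠ 0 := by
    rw [Nat.cast_ne_zero]
    have : 0 < m * α + n * β := Nat.add_pos_left (Nat.mul_pos hm hα) _
    omega
  rw [aT, cT, eT, hd]
  rw [hd] at hd0
  rw [div_add_div _ _ (mul_ne_zero hmt hd0) (mul_ne_zero hnt hd0),
    div_eq_div_iff (mul_ne_zero (mul_ne_zero hmt hd0) (mul_ne_zero hnt hd0)) (mul_ne_zero hmt hnt)]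
  ring

private lemma diag_eq (α β γ : ℕ) (t x y : ℂ) (n : ℕ)
    (hα : 0 < α) (hβ : 0 < β) (hγ : γ = α + β) (ht : t ≠ 0)
    (hmt : (((n+1 : ℕ)) : ℂ) - (β : ℂ) * t ≠ 0) :
    aT α β t x y (n+1) (n+1)
      = 1 / ((γ : ℂ) * t) *
        ((x*y) ^ (n+1) / (((n+1 : ℕ) : ℂ) - (β:ℂ)*t) - (x*y) ^ (n+1) / ((n+1 : ℕ) : ℂ)) := by
  subst hγ
  have hA : (((n+1 : ℕ)) : ℂ) ≠ 0 := Nat.cast_ne_zero.mpr (Nat.succ_ne_zero n)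
  have hab : ((α : ℂ) + (β : ℂ)) ≠ 0 := by
    have := Nat.cast_ne_zero (R := ℂ).mpr (by omega : α + β ≠ 0)
    push_cast at this; exact this
  have hden : (((n+1) * α + (n+1) * β : ℕ) : ℂ) = ((n+1 : ℕ) : ℂ) * ((α : ℂ) + (β : ℂ)) := by
    push_cast; ring
  have hγc : ((α + β : ℕ) : ℂ) = (α : ℂ) + (β : ℂ) := by push_cast; ring
  rw [aT, hden, hγc, mul_pow]
  generalize hg : ((n+1 : ℕ) : ℂ) = A at hmt hA ⊢
  field_simp
  ring

private lemma summable_of_bound {f : ℕ × ℕ → ℂ} {K r s : ℝ}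
    (hr0 : 0 ≤ r) (hr : r < 1) (hs0 : 0 ≤ s) (hs : s < 1)
    (h : ∀ p : ℕ × ℕ, ‖f p‖ ≤ K * (r ^ p.1 * s ^ p.2)) : Summable f := by
  have hgeo : Summable (fun p : ℕ × ℕ => r ^ p.1 * s ^ p.2) :=
    Summable.mul_of_nonneg (summable_geometric_of_lt_one hr0 hr)
      (summable_geometric_of_lt_one hs0 hs)
      (fun n => pow_nonneg hr0 n) (fun n => pow_nonneg hs0 n)
  exact Summable.of_norm (Summable.of_nonneg_of_le (fun p => norm_nonneg _) h (hgeo.mul_left K))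

private lemma norm_term_le {c1 : ℝ} (co : ℕ) (x y : ℂ) (m n k : ℕ)
    (hc1 : 0 < c1) (D : ℂ) (hD : c1 ≤ ‖D‖) (hk : 1 ≤ k) :
    ‖(co : ℂ) * x ^ m * y ^ n / (D * ((k : ℕ) : ℂ))‖ ≤ ((co : ℝ) / c1) * (‖x‖ ^ m * ‖y‖ ^ n) := by
  have hk' : (1 : ℝ) ≤ (k : ℝ) := by exact_mod_cast hk
  have h1 : ‖(co : ℂ) * x ^ m * y ^ n / (D * ((k : ℕ) : ℂ))‖
      = (co : ℝ) * (‖x‖ ^ m * ‖y‖ ^ n) / (‖D‖ * (k : ℝ)) := by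
    rw [norm_div, norm_mul, norm_mul, norm_mul, norm_pow, norm_pow,
      Complex.norm_natCast, Complex.norm_natCast]
    ring
  rw [h1]
  have hden : c1 * 1 ≤ ‖D‖ * (k : ℝ) :=
    mul_le_mul hD hk' zero_le_one (le_trans hc1.le hD)
  calc (co : ℝ) * (‖x‖ ^ m * ‖y‖ ^ n) / (‖D‖ * (k : ℝ))
      ≤ (co : ℝ) * (‖x‖ ^ m * ‖y‖ ^ n) / (c1 * 1) := by
        apply div_le_div_of_nonneg_left _ (by linarith) hden
        positivity
    _ = ((co : ℝ) / c1) * (‖x‖ ^ m * ‖y‖ ^ n) := by rw [mul_one]; ring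

private def eqB : (ℕ × ℕ) ≃ {p : ℕ × ℕ // p.1 < p.2} where
  toFun p := ⟨(p.1, p.1 + p.2 + 1), by omega⟩
  invFun q := (q.1.1, q.1.2 - q.1.1 - 1)
  left_inv p := by
    refine Prod.ext rfl ?_
    simp only
    omega
  right_inv q := by
    have hq := q.2
    refine Subtype.ext (Prod.ext rfl ?_)
    simp only
    omega

private def eqG : (ℕ × ℕ) ≃ {p : ℕ × ℕ // ¬ p.1 < p.2} where
  toFun p := ⟨(p.2 + p.1, p.2), by omega⟩
  invFun q := (q.1.1 - q.1.2, q.1.2)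
  left_inv p := by
    refine Prod.ext ?_ rfl
    simp
  right_inv q := by
    have hq := q.2
    simp only [not_lt] at hq
    refine Subtype.ext (Prod.ext ?_ rfl)
    simp only
    omega

private lemma bound_mono {K : ℝ} {x y : ℂ} (hK : 0 ≤ K) (hx : ‖x‖ ≤ 1) (hy : ‖y‖ ≤ 1)
    {m n i j : ℕ} (hmi : i ≤ m) (hnj : j ≤ n) :
    K * (‖x‖ ^ m * ‖y‖ ^ n) ≤ K * (‖x‖ ^ i * ‖y‖ ^ j) := by
  apply mul_le_mul_of_nonneg_left _ hK
  exact mul_le_mul (pow_le_pow_of_le_one (norm_nonneg x) hx hmi)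
    (pow_le_pow_of_le_one (norm_nonneg y) hy hnj)
    (pow_nonneg (norm_nonneg y) n) (pow_nonneg (norm_nonneg x) i)

/-- The core summation identity: for positive integers `α, β, γ` with
`γ = α + β`, `t ≠ 0` with `βt, −αt` not positive integers, and `|x|,|y| < 1`,
the combination of three double series equals
`(1/(γt)) Σ_{n>0} [(xy)^n/(n−βt) − (xy)^n/n] + Σ_{m>n>0} x^m y^n/((m−βt)(n+αt))`.
(Throughout, `p : ℕ × ℕ` encodes positive indices via `+1` shifts; in the last
sum `m = p.1+p.2+2 > n = p.2+1 > 0`.) -/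
theorem core_summation_identity (α β γ : ℕ) (hα : 0 < α) (hβ : 0 < β)
    (hγ : γ = α + β) (t : ℂ) (ht : t ≠ 0)
    (h1 : ∀ m : ℕ+, (m : ℂ) ≠ (β : ℂ) * t)
    (h2 : ∀ m : ℕ+, (m : ℂ) ≠ -((α : ℂ) * t))
    (x y : ℂ) (hx : ‖x‖ < 1) (hy : ‖y‖ < 1) :
    (∑' p : ℕ × ℕ,
      ((β : ℂ) * x ^ (p.1+1) * y ^ (p.2+1) /
          ((((p.1+1 : ℕ) : ℂ) - (β : ℂ) * t) * ((((p.1+1)*α + (p.2+1)*β : ℕ)) : ℂ))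
        - (β : ℂ) * x ^ (p.1+1) * y ^ (p.1+p.2+2) /
          ((((p.1+1 : ℕ) : ℂ) - (β : ℂ) * t) * ((((p.1+1)*α + (p.1+p.2+2)*β : ℕ)) : ℂ))
        + (α : ℂ) * x ^ (p.1+p.2+2) * y ^ (p.1+1) /
          ((((p.1+1 : ℕ) : ℂ) + (α : ℂ) * t) * ((((p.1+p.2+2)*α + (p.1+1)*β : ℕ)) : ℂ))))
    = (1 / ((γ : ℂ) * t)) * (∑' n : ℕ,
        ((x*y) ^ (n+1) / (((n+1 : ℕ) : ℂ) - (β:ℂ)*t) - (x*y) ^ (n+1) / ((n+1 : ℕ) : ℂ)))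
      + ∑' p : ℕ × ℕ,
        x ^ (p.1+p.2+2) * y ^ (p.2+1) /
          ((((p.1+p.2+2 : ℕ) : ℂ) - (β:ℂ)*t) * (((p.2+1 : ℕ) : ℂ) + (α:ℂ)*t)) := by
  -- lower bounds on denominators
  obtain ⟨cb, hcb, hcbl⟩ := lb_aux ((β : ℂ) * t) (fun m hm => by
    have := h1 ⟨m, hm⟩; exact_mod_cast this)
  obtain ⟨ca, hca, hcal0⟩ := lb_aux (-((α : ℂ) * t)) (fun m hm => by
    have := h2 ⟨m, hm⟩; exact_mod_cast this)
  have hcal : ∀ m : ℕ, 0 < m → ca ≤ ‖((m : ℕ) : ℂ) + (α : ℂ) * t‖ := fun m hm => by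
    have := hcal0 m hm; rwa [sub_neg_eq_add] at this
  have hmt0 : ∀ m : ℕ, 0 < m → ((m : ℕ) : ℂ) - (β : ℂ) * t ≠ 0 := fun m hm h => by
    have := hcbl m hm; rw [h, norm_zero] at this; linarith
  have hnt0 : ∀ m : ℕ, 0 < m → ((m : ℕ) : ℂ) + (α : ℂ) * t ≠ 0 := fun m hm h => by
    have := hcal m hm; rw [h, norm_zero] at this; linarith
  have hx0 : (0:ℝ) ≤ ‖x‖ := norm_nonneg x
  have hy0 : (0:ℝ) ≤ ‖y‖ := norm_nonneg y
  have hKb : (0:ℝ) ≤ (β : ℝ) / cb := by positivity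
  have hKa : (0:ℝ) ≤ (α : ℝ) / ca := by positivity
  -- norm bounds for the basic terms
  have haTb : ∀ m n : ℕ, 0 < m →
      ‖aT α β t x y m n‖ ≤ ((β : ℝ) / cb) * (‖x‖ ^ m * ‖y‖ ^ n) := fun m n hm => by
    rw [aT]
    exact norm_term_le β x y m n _ hcb _ (hcbl m hm)
      (by nlinarith [Nat.mul_pos hm hα] : 1 ≤ m * α + n * β)
  have hcTb : ∀ m n : ℕ, 0 < m → 0 < n →
      ‖cT α β t x y m n‖ ≤ ((α : ℝ) / ca) * (‖x‖ ^ m * ‖y‖ ^ n) := fun m n hm hn => by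
    rw [cT]
    exact norm_term_le α x y m n _ hca _ (hcal n hn)
      (by nlinarith [Nat.mul_pos hm hα] : 1 ≤ m * α + n * β)
  -- the six summable families
  have hFs : Summable (fun p : ℕ × ℕ => aT α β t x y (p.1+1) (p.2+1)) := by
    refine summable_of_bound (K := (β:ℝ)/cb) hx0 hx hy0 hy (fun p => le_trans (haTb _ _ (by omega)) ?_)
    exact bound_mono hKb hx.le hy.le (by omega) (by omega)
  have hBs : Summable (fun p : ℕ × ℕ => aT α β t x y (p.1+1) (p.1+p.2+2)) := by
    refine summable_of_bound (K := (β:ℝ)/cb) hx0 hx hy0 hy (fun p => le_trans (haTb _ _ (by omega)) ?_)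
    exact bound_mono hKb hx.le hy.le (by omega) (by omega)
  have hCs : Summable (fun p : ℕ × ℕ => cT α β t x y (p.1+p.2+2) (p.1+1)) := by
    refine summable_of_bound (K := (α:ℝ)/ca) hy0 hy hx0 hx
      (fun p => le_trans (hcTb _ _ (by omega) (by omega)) ?_)
    calc ((α : ℝ) / ca) * (‖x‖ ^ (p.1+p.2+2) * ‖y‖ ^ (p.1+1))
        ≤ ((α : ℝ) / ca) * (‖x‖ ^ p.2 * ‖y‖ ^ p.1) :=
          bound_mono hKa hx.le hy.le (by omega) (by omega)
      _ = ((α : ℝ) / ca) * (‖y‖ ^ p.1 * ‖x‖ ^ p.2) := by ring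
  have hGs : Summable (fun p : ℕ × ℕ => aT α β t x y (p.2+p.1+1) (p.2+1)) := by
    refine summable_of_bound (K := (β:ℝ)/cb) hx0 hx hy0 hy (fun p => le_trans (haTb _ _ (by omega)) ?_)
    exact bound_mono hKb hx.le hy.le (by omega) (by omega)
  have hG's : Summable (fun p : ℕ × ℕ => aT α β t x y (p.2+p.1+2) (p.2+1)) := by
    refine summable_of_bound (K := (β:ℝ)/cb) hx0 hx hy0 hy (fun p => le_trans (haTb _ _ (by omega)) ?_)
    exact bound_mono hKb hx.le hy.le (by omega) (by omega)
  have hCrs : Summable (fun p : ℕ × ℕ => cT α β t x y (p.2+p.1+2) (p.2+1)) := by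
    refine summable_of_bound (K := (α:ℝ)/ca) hx0 hx hy0 hy
      (fun p => le_trans (hcTb _ _ (by omega) (by omega)) ?_)
    exact bound_mono hKa hx.le hy.le (by omega) (by omega)
  -- split the A-sum over the region {p.1 < p.2} and its complement
  set S : Set (ℕ × ℕ) := {p : ℕ × ℕ | p.1 < p.2} with hS
  have hsplit :
      (∑' p : ℕ × ℕ, aT α β t x y (p.1+1) (p.2+1))
        = (∑' p : ℕ × ℕ, aT α β t x y (p.1+1) (p.1+p.2+2))
          + ((∑' n : ℕ, aT α β t x y (n+1) (n+1))
            + ∑' p : ℕ × ℕ, aT α β t x y (p.2+p.1+2) (p.2+1)) := by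
    have h0 := Summable.tsum_subtype_add_tsum_subtype_compl hFs S
    have hB : (∑' q : S, aT α β t x y (q.1.1+1) (q.1.2+1))
        = ∑' p : ℕ × ℕ, aT α β t x y (p.1+1) (p.1+p.2+2) := by
      exact ((Equiv.tsum_eq eqB (fun q : {p : ℕ × ℕ // p.1 < p.2} =>
        aT α β t x y (q.1.1+1) (q.1.2+1))).symm.trans (tsum_congr fun p => rfl))
    have hG : (∑' q : ↥Sᶜ, aT α β t x y (q.1.1+1) (q.1.2+1))
        = ∑' p : ℕ × ℕ, aT α β t x y (p.2+p.1+1) (p.2+1) := by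
      exact ((Equiv.tsum_eq eqG (fun q : {p : ℕ × ℕ // ¬ p.1 < p.2} =>
        aT α β t x y (q.1.1+1) (q.1.2+1))).symm.trans (tsum_congr fun p => rfl))
    have hT : (∑' p : ℕ × ℕ, aT α β t x y (p.2+p.1+1) (p.2+1))
        = (∑' n : ℕ, aT α β t x y (n+1) (n+1))
          + ∑' p : ℕ × ℕ, aT α β t x y (p.2+p.1+2) (p.2+1) := by
      rw [Summable.tsum_prod hGs, Summable.tsum_eq_zero_add hGs.prod]
      refine congrArg₂ HAdd.hAdd rfl ?_
      exact (Summable.tsum_prod hG's).symm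
    rw [← h0, hB, hG, hT]
  -- now put things together
  calc (∑' p : ℕ × ℕ,
      ((β : ℂ) * x ^ (p.1+1) * y ^ (p.2+1) /
          ((((p.1+1 : ℕ) : ℂ) - (β : ℂ) * t) * ((((p.1+1)*α + (p.2+1)*β : ℕ)) : ℂ))
        - (β : ℂ) * x ^ (p.1+1) * y ^ (p.1+p.2+2) /
          ((((p.1+1 : ℕ) : ℂ) - (β : ℂ) * t) * ((((p.1+1)*α + (p.1+p.2+2)*β : ℕ)) : ℂ))
        + (α : ℂ) * x ^ (p.1+p.2+2) * y ^ (p.1+1) /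
          ((((p.1+1 : ℕ) : ℂ) + (α : ℂ) * t) * ((((p.1+p.2+2)*α + (p.1+1)*β : ℕ)) : ℂ))))
      = (∑' p : ℕ × ℕ, (aT α β t x y (p.1+1) (p.2+1)
          - aT α β t x y (p.1+1) (p.1+p.2+2) + cT α β t x y (p.1+p.2+2) (p.1+1))) := by rfl
    _ = (∑' p : ℕ × ℕ, aT α β t x y (p.1+1) (p.2+1))
          - (∑' p : ℕ × ℕ, aT α β t x y (p.1+1) (p.1+p.2+2))
          + (∑' p : ℕ × ℕ, cT α β t x y (p.1+p.2+2) (p.1+1)) := by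
        rw [Summable.tsum_add (hFs.sub hBs) hCs, Summable.tsum_sub hFs hBs]
    _ = (∑' n : ℕ, aT α β t x y (n+1) (n+1))
          + ((∑' p : ℕ × ℕ, aT α β t x y (p.2+p.1+2) (p.2+1))
            + (∑' p : ℕ × ℕ, cT α β t x y (p.1+p.2+2) (p.1+1))) := by
        rw [hsplit]; ring
    _ = (∑' n : ℕ, aT α β t x y (n+1) (n+1))
          + ((∑' p : ℕ × ℕ, aT α β t x y (p.2+p.1+2) (p.2+1))
            + (∑' p : ℕ × ℕ, cT α β t x y (p.2+p.1+2) (p.2+1))) := by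
        congr 1
        congr 1
        rw [← (Equiv.prodComm ℕ ℕ).tsum_eq (fun p : ℕ × ℕ => cT α β t x y (p.1+p.2+2) (p.1+1))]
        rfl
    _ = (∑' n : ℕ, aT α β t x y (n+1) (n+1))
          + (∑' p : ℕ × ℕ, eT α β t x y (p.2+p.1+2) (p.2+1)) := by
        congr 1
        rw [← Summable.tsum_add hG's hCrs]
        exact tsum_congr fun p =>
          partial_frac α β t x y (p.2+p.1+2) (p.2+1) hα hβ (by omega)
            (hmt0 _ (by omega)) (hnt0 _ (by omega))
    _ = (1 / ((γ : ℂ) * t)) * (∑' n : ℕ,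
        ((x*y) ^ (n+1) / (((n+1 : ℕ) : ℂ) - (β:ℂ)*t) - (x*y) ^ (n+1) / ((n+1 : ℕ) : ℂ)))
      + ∑' p : ℕ × ℕ,
        x ^ (p.1+p.2+2) * y ^ (p.2+1) /
          ((((p.1+p.2+2 : ℕ) : ℂ) - (β:ℂ)*t) * (((p.2+1 : ℕ) : ℂ) + (α:ℂ)*t)) := by
        congr 1
        · rw [← tsum_mul_left]
          exact tsum_congr fun n =>
            diag_eq α β γ t x y n hα hβ hγ ht (hmt0 _ (by omega))
        · refine tsum_congr fun p => ?_
          have h : p.2 + p.1 + 2 = p.1 + p.2 + 2 := by omega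
          rw [eT, h]
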